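/- Let Y be a real random variable whose law is a mixture ν = (1-p)·ν0 + p·ν1 with p ∈ (0,1], where ν1 is the law of a component Y1. For any q ∈ (0,1), the q-quantile of ν1 satisfies F⁻¹(q·p) ≤ F1⁻¹(q) ≤ F⁻¹(q·p + 1 - p), where F and F1 are the CDFs of ν and ν1 and F⁻¹(u) = inf{y : F(y) ≥ u} is the generalized inverse. -/

import Mathlib

open MeasureTheory

/-- The CDF of a measure on `ℝ`. -/
noncomputable def cdfOf (ν : Measure ℝ) (y : ℝ) : ℝ := (ν (Set.Iic y)).toReal

/-- Generalized inverse (left-continuous quantile function) of a CDF. -/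
noncomputable def qtl (F : ℝ → ℝ) (u : ℝ) : ℝ := sInf {y : ℝ | u ≤ F y}

lemma cdfOf_eq_cdf (μ : Measure ℝ) [IsProbabilityMeasure μ] :
    cdfOf μ = ProbabilityTheory.cdf μ := by
  funext x; rw [cdfOf, ProbabilityTheory.cdf_eq_real]; rfl

lemma bddBelow_qtl_set (μ : Measure ℝ) [IsProbabilityMeasure μ] {u : ℝ} (hu : 0 < u) :
    BddBelow {y : ℝ | u ≤ cdfOf μ y} := by
  rw [cdfOf_eq_cdf]
  have := ProbabilityTheory.tendsto_cdf_atBot μ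
  rw [Filter.tendsto_atBot'] at this
  obtain ⟨b, hb⟩ := this (Set.Iio u) (Iio_mem_nhds hu)
  refine ⟨b, fun y hy => ?_⟩
  have hy' : u ≤ ProbabilityTheory.cdf μ y := hy
  by_contra h
  exact absurd hy' (not_le.2 (hb y (le_of_not_ge h)))

lemma nonempty_qtl_set (μ : Measure ℝ) [IsProbabilityMeasure μ] {u : ℝ} (hu : u < 1) :
    Set.Nonempty {y : ℝ | u ≤ cdfOf μ y} := by
  rw [cdfOf_eq_cdf]
  have := ProbabilityTheory.tendsto_cdf_atTop μ
  rw [Filter.tendsto_atTop'] at this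
  obtain ⟨b, hb⟩ := this (Set.Ioi u) (Ioi_mem_nhds hu)
  exact ⟨b + 1, show u ≤ _ from (hb (b + 1) (by linarith)).le⟩

/-- Horowitz–Manski (1995) Proposition 3: quantile bounds for a mixture component. -/
theorem stmt_1
    (ν ν0 ν1 : Measure ℝ) [IsProbabilityMeasure ν] [IsProbabilityMeasure ν0]
    [IsProbabilityMeasure ν1] (p : ℝ) (hp : p ∈ Set.Ioc (0 : ℝ) 1)
    (hmix : ν = ENNReal.ofReal (1 - p) • ν0 + ENNReal.ofReal p • ν1)
    (q : ℝ) (hq : q ∈ Set.Ioo (0 : ℝ) 1) :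
    qtl (cdfOf ν) (q * p) ≤ qtl (cdfOf ν1) q ∧
      qtl (cdfOf ν1) q ≤ qtl (cdfOf ν) (q * p + 1 - p) := by
  obtain ⟨hp0, hp1⟩ := hp
  obtain ⟨hq0, hq1⟩ := hq
  have hF : ∀ y, cdfOf ν y = (1 - p) * cdfOf ν0 y + p * cdfOf ν1 y := by
    intro y
    simp only [cdfOf, hmix, Measure.add_apply, Measure.smul_apply, smul_eq_mul]
    rw [ENNReal.toReal_add (by finiteness) (by finiteness), ENNReal.toReal_mul,
      ENNReal.toReal_mul, ENNReal.toReal_ofReal (by linarith), ENNReal.toReal_ofReal hp0.le]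
  have h0le : ∀ y, 0 ≤ cdfOf ν0 y := fun y => ENNReal.toReal_nonneg
  have h0ub : ∀ y, cdfOf ν0 y ≤ 1 := fun y => by
    rw [cdfOf_eq_cdf]; exact ProbabilityTheory.cdf_le_one _ _
  constructor
  · apply csInf_le_csInf (bddBelow_qtl_set ν (by positivity)) (nonempty_qtl_set ν1 hq1)
    intro y hy
    have : q ≤ cdfOf ν1 y := hy
    have := h0le y
    simp only [Set.mem_setOf_eq, hF y]
    nlinarith
  · apply csInf_le_csInf (bddBelow_qtl_set ν1 hq0) (nonempty_qtl_set ν (by nlinarith))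
    intro y hy
    have h : q * p + 1 - p ≤ cdfOf ν y := hy
    rw [hF y] at h
    have := h0ub y
    have : q * p ≤ p * cdfOf ν1 y := by nlinarith
    simp only [Set.mem_setOf_eq]
    nlinarith
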